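/- The quantity H(ω, v₁) = ½(J ω² + M v₁² − 2 L₂ ω v₁) is a first integral of the system ω' = (1/D)(L₁ω + Z v₁ + ρα)(L₂ω − M v₁), v₁' = (1/D)(L₁ω + Z v₁ + ρα)(Jω − L₂v₁), i.e. for any solution (ω(t), v₁(t)) the derivative of H(ω(t), v₁(t)) with respect to t is identically zero. -/

import Mathlib

theorem energy_first_integral
    (J M L₁ L₂ Z ρ α : ℝ) (D : ℝ) (hD : D = M * J - L₂ ^ 2) (hD0 : D ≠ 0)
    (ω v₁ : ℝ → ℝ)
    (hω : ∀ t, HasDerivAt ω ((1 / D) * (L₁ * ω t + Z * v₁ t + ρ * α) * (L₂ * ω t - M * v₁ t)) t)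
    (hv : ∀ t, HasDerivAt v₁ ((1 / D) * (L₁ * ω t + Z * v₁ t + ρ * α) * (J * ω t - L₂ * v₁ t)) t) :
    ∀ t, HasDerivAt
      (fun t => (1 / 2) * (J * ω t ^ 2 + M * v₁ t ^ 2 - 2 * L₂ * ω t * v₁ t)) 0 t := by
  intro t
  have h := (((((hω t).pow 2).const_mul J).add (((hv t).pow 2).const_mul M)).sub
    ((((hω t).mul (hv t)).const_mul (2 * L₂)))).const_mul ((1:ℝ)/2)
  convert h using 1
  · rfl
  · rfl
  · ext x; simp only [Pi.add_apply, Pi.sub_apply, Pi.mul_apply, Pi.pow_apply]; ring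
  · field_simp
    ring
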